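/- Let p be an odd prime, let i be an integer with i ≥ 2, and let a, b, c be integers with a ≠ 0 and gcd(a, p^i) = p^l for some l with 1 ≤ l < i; let d = b² − 4·a·c. Then IQF is valid for a·x² + b·x + c ≡ 0 (mod p^i) if and only if either (a) d is not a quadratic residue of p^i, or (b) d is a quadratic residue of p^i and exactly one of the following mutually exclusive conditions holds: (i) l > 1, p divides b, and (p^i, p^l) forms a (b, d)-obstruction; (ii) l = 1, i is odd, p divides both b and c, and p^{i+1} divides d. -/

import Mathlib

/-- An integer `u` is a quadratic residue of the nonzero integer `v`. -/
def IsQR (v u : ℤ) : Prop := ∃ x : ℤ, v ∣ x ^ 2 - u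

/-- The intermediate form of the quadratic formula (IQF) is valid for
`a·x² + b·x + c ≡ 0 (mod n)`. -/
def IQF (a b c n : ℤ) : Prop :=
  ∀ x : ℤ, n ∣ a * x ^ 2 + b * x + c ↔
    ∃ s : ℤ, n ∣ s ^ 2 - (b ^ 2 - 4 * a * c) ∧ n ∣ 2 * a * x - (-b + s)

/-- `(p^α, p^β)` forms a `(b, d)`-obstruction (paper's Definition 3.4):
either condition (iii) or condition (iv) of Proposition 3.3 holds. -/
def Obstruction (p α β : ℕ) (b d : ℤ) : Prop :=
  (¬ (p : ℤ) ^ α ∣ d ∧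
    ∃ μ : ℕ, padicValInt p d = 2 * μ ∧
      ∀ σ : ℤ, 0 ≤ σ → σ < (p : ℤ) ^ (α - 2 * μ) →
        (p : ℤ) ^ (α - 2 * μ) ∣ σ ^ 2 - d / (p : ℤ) ^ (2 * μ) →
        ∀ i : ℕ, i < p ^ μ →
          ¬ (p : ℤ) ^ β ∣ σ * (p : ℤ) ^ μ + (i : ℤ) * (p : ℤ) ^ (α - μ) - b) ∨
  ((p : ℤ) ^ α ∣ d ∧
    ∃ s : ℕ, (α = 2 * s ∨ α = 2 * s - 1) ∧
      ∀ i : ℕ, i < p ^ (α - s) → ¬ (p : ℤ) ^ β ∣ (i : ℤ) * (p : ℤ) ^ s - b)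


section Helpers

variable {p : ℕ}

lemma intPrime (hp : p.Prime) : Prime (p : ℤ) := Nat.prime_iff_prime_int.1 hp

lemma not_dvd_two (hp : p.Prime) (hodd : Odd p) : ¬ (p : ℤ) ∣ 2 := by
  intro h
  have h2 : (p : ℤ) ∣ ((2 : ℕ) : ℤ) := by exact_mod_cast h
  have h3 := Int.natCast_dvd_natCast.mp h2
  have := (Nat.prime_dvd_prime_iff_eq hp Nat.prime_two).mp h3
  subst this
  simp [Nat.odd_iff] at hodd

lemma coprime_of_not_dvd (hp : p.Prime) {t : ℤ} (ht : ¬ (p:ℤ) ∣ t) : IsCoprime (p:ℤ) t :=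
  ((intPrime hp).coprime_iff_not_dvd).mpr ht

/-- modular inverse solving: if p ∤ m then for all z there is x with p^N ∣ m*x - z -/
lemma solve_lin (hp : p.Prime) {m : ℤ} (hm : ¬ (p:ℤ) ∣ m) (N : ℕ) (z : ℤ) :
    ∃ x : ℤ, (p:ℤ)^N ∣ m * x - z := by
  have hc : IsCoprime m ((p:ℤ)^N) := ((coprime_of_not_dvd hp hm).symm.pow_right)
  obtain ⟨u, v, huv⟩ := hc
  refine ⟨u * z, ⟨-(v * z), ?_⟩⟩
  have huv' : u * m = 1 - v * (p:ℤ)^N := by linarith [huv]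
  calc m * (u * z) - z = (u * m - 1) * z := by ring
    _ = (p:ℤ)^N * -(v*z) := by rw [huv']; ring

lemma dvd_le_iff (hp : p.Prime) {z : ℤ} (hz : z ≠ 0) (n : ℕ) :
    (p:ℤ)^n ∣ z ↔ n ≤ padicValInt p z := by
  haveI : Fact p.Prime := ⟨hp⟩
  rw [padicValInt_dvd_iff (p := p)]
  simp [hz]

lemma exact_decomp (hp : p.Prime) {z : ℤ} {n : ℕ} (h1 : (p:ℤ)^n ∣ z) (h2 : ¬ (p:ℤ)^(n+1) ∣ z) :
    ∃ u : ℤ, z = (p:ℤ)^n * u ∧ ¬ (p:ℤ) ∣ u := by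
  obtain ⟨u, hu⟩ := h1
  refine ⟨u, hu, fun hdvd => h2 ?_⟩
  obtain ⟨v, hv⟩ := hdvd
  exact ⟨v, by rw [hu, hv, pow_succ]; ring⟩

/-- from p^(2s-1) ∣ w^2 conclude p^s ∣ w (works also for w = 0) -/
lemma sqrt_dvd (hp : p.Prime) {w : ℤ} {s : ℕ} (h : (p:ℤ)^(2*s-1) ∣ w^2) : (p:ℤ)^s ∣ w := by
  rcases eq_or_ne w 0 with rfl | hw
  · simp
  · have hw2 : w^2 ≠ 0 := pow_ne_zero _ hw
    rw [dvd_le_iff hp hw2] at h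
    rw [dvd_le_iff hp hw]
    have : padicValInt p (w^2) = 2 * padicValInt p w := by
      haveI : Fact p.Prime := ⟨hp⟩
      have := padicValInt.mul (p := p) hw hw
      rw [sq]; omega
    omega

lemma val_eq (hp : p.Prime) {z : ℤ} {n : ℕ} (h1 : (p:ℤ)^n ∣ z) (h2 : ¬ (p:ℤ)^(n+1) ∣ z) :
    padicValInt p z = n := by
  have hz : z ≠ 0 := by rintro rfl; exact h2 (dvd_zero _)
  rw [dvd_le_iff hp hz] at h1 h2
  omega

/-- choose k with p ∤ k*(2*u + k*p^c), provided (c = 0 ∨ p ∤ u) -/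
lemma choose_k (hp : p.Prime) (hodd : Odd p) (u : ℤ) (c : ℕ) (hu : 0 < c → ¬ (p:ℤ) ∣ u) :
    ∃ k : ℤ, ¬ (p:ℤ) ∣ k * (2 * u + k * (p:ℤ)^c) := by
  have h2 : ¬ (p:ℤ) ∣ 2 := not_dvd_two hp hodd
  rcases Nat.eq_zero_or_pos c with rfl | hc
  · by_cases h1 : (p:ℤ) ∣ 2*u + 1
    · refine ⟨2, fun h => ?_⟩
      simp only [pow_zero, mul_one] at h
      have h3 : (p:ℤ) ∣ 2*u + 2 := by
        have := (intPrime hp).dvd_mul.mp (by simpa using h)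
        rcases this with h' | h'
        · exact absurd h' h2
        · exact h'
      have h4 : (p:ℤ) ∣ 1 := by simpa using dvd_sub h3 h1
      exact (intPrime hp).not_dvd_one h4
    · exact ⟨1, by simpa using h1⟩
  · refine ⟨1, fun h => ?_⟩
    simp only [one_mul, mul_one] at h
    have hpc : (p:ℤ) ∣ (p:ℤ)^c := dvd_pow_self _ hc.ne'
    have h2u : (p:ℤ) ∣ 2*u := by
      have := dvd_sub h (dvd_pow_self (p:ℤ) hc.ne')
      simpa using this
    rcases (intPrime hp).dvd_mul.mp h2u with h' | h'
    · exact h2 h'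
    · exact hu hc h'

lemma key_S (hp : p.Prime) (hodd : Odd p) {i l : ℕ} {b d w u : ℤ} {f c : ℕ}
    (hw : w = (p:ℤ)^f * u) (hu : 0 < c → ¬(p:ℤ) ∣ u)
    (hle : l ≤ f + c) (hi2 : i ≤ 2*f + c) (hil : 2*f + c + 1 ≤ i + l)
    (hwb : (p:ℤ)^l ∣ w - b) (hroot : (p:ℤ)^i ∣ w^2 - d) :
    ∃ w', (p:ℤ)^l ∣ w' - b ∧ (p:ℤ)^i ∣ w'^2 - d ∧ ¬ (p:ℤ)^(i+l) ∣ w'^2 - d := by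
  by_cases hbig : (p:ℤ)^(i+l) ∣ w^2 - d
  swap
  · exact ⟨w, hwb, hroot, hbig⟩
  obtain ⟨k, hk⟩ := choose_k hp hodd u c hu
  set P := (p:ℤ) with hP
  have hP0 : P ≠ 0 := by
    simp [hP]
    exact hp.ne_zero
  have halg : (w + k * P^(f+c))^2 - d = (w^2 - d) + P^(2*f+c) * (k * (2*u + k*P^c)) := by
    subst hw
    have e1 : P^(f+c) = P^f * P^c := pow_add _ _ _
    have e2 : P^(2*f+c) = P^f * P^f * P^c := by
      rw [show 2*f+c = f + (f + c) by ring, pow_add, e1]; ring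
    rw [e1, e2]; ring
  refine ⟨w + k * P^(f+c), ?_, ?_, ?_⟩
  · have e : w + k*P^(f+c) - b = (w-b) + k*P^(f+c) := by ring
    rw [e]
    exact dvd_add hwb (Dvd.dvd.mul_left (pow_dvd_pow P hle) k)
  · rw [halg]
    exact dvd_add hroot ((pow_dvd_pow P hi2).mul_right _)
  · intro h
    have h1 : P^(2*f+c+1) ∣ (w^2 - d) := (pow_dvd_pow P hil).trans hbig
    have h2 : P^(2*f+c+1) ∣ (w + k*P^(f+c))^2 - d := (pow_dvd_pow P hil).trans h
    rw [halg] at h2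
    have h3 : P^(2*f+c+1) ∣ P^(2*f+c) * (k * (2*u + k*P^c)) := by
      have := dvd_sub h2 h1
      simpa using this
    rw [pow_succ] at h3
    exact hk ((mul_dvd_mul_iff_left (pow_ne_zero (2*f+c) hP0)).mp h3)
lemma iqf_iff (hp : p.Prime) (hodd : Odd p) {i l : ℕ} (hl1 : 1 ≤ l) (hli : l < i)
    {a b c a' : ℤ} (ha' : a = (p:ℤ)^l * a') (hpa' : ¬(p:ℤ) ∣ a') :
    IQF a b c ((p:ℤ)^i) ↔
      ∀ w : ℤ, (p:ℤ)^l ∣ w - b → (p:ℤ)^i ∣ w^2 - (b^2 - 4*a*c) →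
        (p:ℤ)^(i+l) ∣ w^2 - (b^2 - 4*a*c) := by
  set P := (p:ℤ) with hPdef
  set d := b^2 - 4*a*c with hd
  have hP0 : P ≠ 0 := Int.natCast_ne_zero.mpr hp.ne_zero
  have hpl0 : P^l ≠ 0 := pow_ne_zero _ hP0
  have h2a' : ¬ P ∣ 2*a' := by
    intro h
    rcases (intPrime hp).dvd_mul.mp h with h|h
    exacts [not_dvd_two hp hodd h, hpa' h]
  have hid : ∀ x : ℤ, 4*a*(a*x^2+b*x+c) = (2*a*x+b)^2 - d := fun x => by rw [hd]; ring
  constructor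
  · intro hIQF w hwb hwr
    obtain ⟨z, hz⟩ := hwb
    obtain ⟨x, hx⟩ := solve_lin hp h2a' i z
    have hkey : P^(i+l) ∣ 2*a*x - (w - b) := by
      obtain ⟨t, ht⟩ := hx
      refine ⟨t, ?_⟩
      have : 2*a*x - (w-b) = P^l * (2*a'*x - z) := by rw [ha', hz]; ring
      rw [this, ht, pow_add]; ring
    have hqx : P^i ∣ a*x^2+b*x+c := by
      refine (hIQF x).mpr ⟨w, hwr, ?_⟩
      have e : 2*a*x - (-b + w) = 2*a*x - (w - b) := by ring
      rw [e]
      exact (pow_dvd_pow P (Nat.le_add_right i l)).trans hkey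
    have h4 : P^(i+l) ∣ (2*a*x+b)^2 - d := by
      rw [← hid]
      have e : 4*a*(a*x^2+b*x+c) = P^l * (4*a'*(a*x^2+b*x+c)) := by rw [ha']; ring
      rw [e, add_comm i l, pow_add]
      exact mul_dvd_mul_left _ (Dvd.dvd.mul_left hqx _)
    have h5 : P^(i+l) ∣ w^2 - (2*a*x+b)^2 := by
      have e : w^2 - (2*a*x+b)^2 = -(2*a*x - (w-b)) * (w + (2*a*x+b)) := by ring
      rw [e]
      exact (hkey.neg_right.mul_right _)
    have e : w^2 - d = (w^2 - (2*a*x+b)^2) + ((2*a*x+b)^2 - d) := by ring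
    rw [e]
    exact dvd_add h5 h4
  · intro H x
    constructor
    · intro hq
      refine ⟨2*a*x+b, ?_, ?_⟩
      · rw [← hid]; exact Dvd.dvd.mul_left hq (4*a)
      · have e : 2*a*x - (-b + (2*a*x+b)) = 0 := by ring
        rw [e]; exact dvd_zero _
    · rintro ⟨s, hs1, hs2⟩
      have hwb : P^l ∣ (2*a*x+b) - b := ⟨2*a'*x, by rw [ha']; ring⟩
      have hws : P^i ∣ (2*a*x+b) - s := by
        have e : (2*a*x+b) - s = 2*a*x - (-b+s) := by ring
        rw [e]; exact hs2
      have hwr : P^i ∣ (2*a*x+b)^2 - d := by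
        have e : (2*a*x+b)^2 - d = ((2*a*x+b)-s)*((2*a*x+b)+s) + (s^2 - d) := by ring
        rw [e]; exact dvd_add (hws.mul_right _) hs1
      have hbig := H (2*a*x+b) hwb hwr
      have h4 : P^l * P^i ∣ P^l * ((4*a')*(a*x^2+b*x+c)) := by
        have e : P^l * ((4*a')*(a*x^2+b*x+c)) = (2*a*x+b)^2 - d := by
          rw [← hid, ha']; ring
        rw [e, ← pow_add, add_comm l i]
        exact hbig
      have h5 : P^i ∣ (4*a') * (a*x^2+b*x+c) := (mul_dvd_mul_iff_left hpl0).mp h4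
      have hc : IsCoprime (P^i) (4*a') := by
        have h44 : ¬ P ∣ 4*a' := by
          intro h
          rcases (intPrime hp).dvd_mul.mp h with h|h
          · rcases (intPrime hp).dvd_mul.mp (by rwa [show (4:ℤ) = 2*2 by norm_num] at h) with h|h <;>
              exact not_dvd_two hp hodd h
          · exact hpa' h
        exact (coprime_of_not_dvd hp h44).pow_left
      exact hc.dvd_of_dvd_mul_left h5
/-- Case A: root `w ≡ b (mod p^l)` and `p^i ∤ d` produce a strong root. -/
lemma caseA_S (hp : p.Prime) (hodd : Odd p) {i l : ℕ} {b d w : ℤ}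
    (hl1 : 1 ≤ l) (hli : l < i)
    (hroot : (p:ℤ)^i ∣ w^2 - d) (hwb : (p:ℤ)^l ∣ w - b) (hnd : ¬ (p:ℤ)^i ∣ d) :
    ∃ w', (p:ℤ)^l ∣ w' - b ∧ (p:ℤ)^i ∣ w'^2 - d ∧ ¬ (p:ℤ)^(i+l) ∣ w'^2 - d := by
  haveI : Fact p.Prime := ⟨hp⟩
  set P := (p:ℤ) with hPdef
  have hd0 : d ≠ 0 := by rintro rfl; exact hnd (dvd_zero _)
  set v := padicValInt p d with hv
  have hv1 : P^v ∣ d := padicValInt_dvd d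
  have hvi : v < i := by
    by_contra hc
    exact hnd ((pow_dvd_pow P (by omega)).trans hv1)
  have hv2 : ¬ P^(v+1) ∣ d := by rw [dvd_le_iff hp hd0]; omega
  have hw1 : P^v ∣ w^2 := by
    have : w^2 = (w^2 - d) + d := by ring
    rw [this]
    exact dvd_add ((pow_dvd_pow P hvi.le).trans hroot) hv1
  have hw2 : ¬ P^(v+1) ∣ w^2 := by
    intro h
    apply hv2
    have : d = w^2 - (w^2 - d) := by ring
    rw [this]
    exact dvd_sub h ((pow_dvd_pow P (by omega)).trans hroot)
  have hw0 : w ≠ 0 := by rintro rfl; exact hw2 (by simp)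
  set m := padicValInt p w with hm
  have hvm : v = 2*m := by
    have h1 := val_eq hp hw1 hw2
    have h2 : padicValInt p (w^2) = 2*m := by
      have := padicValInt.mul (p := p) hw0 hw0
      rw [sq]; omega
    omega
  have hmw : P^m ∣ w := padicValInt_dvd w
  have hmw2 : ¬ P^(m+1) ∣ w := by rw [dvd_le_iff hp hw0]; omega
  obtain ⟨u, hwu, hpu⟩ := exact_decomp hp hmw hmw2
  rcases max_choice l (i - m) with hmax | hmax <;>
  · refine key_S hp hodd (f := m) (c := max l (i-m) - m) hwu (fun _ => hpu) ?_ ?_ ?_ hwb hroot <;>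
      omega
/-- Case B: root `w ≡ b (mod p^l)`, `p^i ∣ d`, `2 ≤ l` produce a strong root. -/
lemma caseB_S (hp : p.Prime) (hodd : Odd p) {i l : ℕ} {b d w : ℤ}
    (hl2 : 2 ≤ l) (hli : l < i)
    (hroot : (p:ℤ)^i ∣ w^2 - d) (hwb : (p:ℤ)^l ∣ w - b) (hdd : (p:ℤ)^i ∣ d) :
    ∃ w', (p:ℤ)^l ∣ w' - b ∧ (p:ℤ)^i ∣ w'^2 - d ∧ ¬ (p:ℤ)^(i+l) ∣ w'^2 - d := by
  haveI : Fact p.Prime := ⟨hp⟩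
  set P := (p:ℤ) with hPdef
  set s := (i+1)/2 with hs
  have hs1 : i ≤ 2*s := by omega
  have hs2 : 2*s ≤ i+1 := by omega
  have hw2 : P^i ∣ w^2 := by
    have : w^2 = (w^2 - d) + d := by ring
    rw [this]; exact dvd_add hroot hdd
  have hsw : P^s ∣ w := sqrt_dvd hp ((pow_dvd_pow P (by omega : 2*s-1 ≤ i)).trans hw2)
  by_cases he : P^(max l s) ∣ w
  · obtain ⟨u, hu⟩ := he
    rcases max_choice l s with hmax | hmax <;>
    · refine key_S hp hodd (f := max l s) (c := 0) hu (by omega) ?_ ?_ ?_ hwb hroot <;> omega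
  · have hw0 : w ≠ 0 := by rintro rfl; exact he (dvd_zero _)
    set m := padicValInt p w with hm
    have hms : s ≤ m := by rw [dvd_le_iff hp hw0] at hsw; omega
    have hme : m < max l s := by
      by_contra hc
      exact he ((pow_dvd_pow P (by omega)).trans (padicValInt_dvd w))
    have hmw : P^m ∣ w := padicValInt_dvd w
    have hmw2 : ¬ P^(m+1) ∣ w := by rw [dvd_le_iff hp hw0]; omega
    obtain ⟨u, hwu, hpu⟩ := exact_decomp hp hmw hmw2
    rcases max_choice l s with hmax | hmax <;>
    · refine key_S hp hodd (f := m) (c := max l s - m) hwu (fun _ => hpu) ?_ ?_ ?_ hwb hroot <;>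
        omega

/-- If `p ∤ b`, `d ≡ b² (mod p^l)` and `d` has a square root mod `p^i`,
there is a strong root. -/
lemma notb_S (hp : p.Prime) (hodd : Odd p) {i l : ℕ} {b d w₀ : ℤ}
    (hl1 : 1 ≤ l) (hli : l < i)
    (hroot : (p:ℤ)^i ∣ w₀^2 - d) (hdb : (p:ℤ)^l ∣ b^2 - d) (hpb : ¬ (p:ℤ) ∣ b) :
    ∃ w', (p:ℤ)^l ∣ w' - b ∧ (p:ℤ)^i ∣ w'^2 - d ∧ ¬ (p:ℤ)^(i+l) ∣ w'^2 - d := by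
  set P := (p:ℤ) with hPdef
  have hpw : ¬ P ∣ w₀ := by
    intro h
    apply hpb
    have hpd : P ∣ d := by
      have e : d = w₀^2 - (w₀^2 - d) := by ring
      rw [e]
      refine dvd_sub ?_ ((dvd_pow_self P (by omega : i ≠ 0)).trans hroot)
      rw [sq]; exact h.mul_left w₀
    have hpb2 : P ∣ b^2 := by
      have e : b^2 = (b^2 - d) + d := by ring
      rw [e]
      exact dvd_add ((dvd_pow_self P (by omega : l ≠ 0)).trans hdb) hpd
    exact (intPrime hp).dvd_of_dvd_pow hpb2
  have hprod : P^l ∣ (w₀ - b) * (w₀ + b) := by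
    have e : (w₀ - b) * (w₀ + b) = (w₀^2 - d) - (b^2 - d) := by ring
    rw [e]
    exact dvd_sub ((pow_dvd_pow P hli.le).trans hroot) hdb
  by_cases hc : P ∣ w₀ + b
  · -- use -w₀
    have hcm : ¬ P ∣ w₀ - b := by
      intro h'
      have h2 : P ∣ 2*w₀ := by
        have e : 2*w₀ = (w₀ - b) + (w₀ + b) := by ring
        rw [e]; exact dvd_add h' hc
      rcases (intPrime hp).dvd_mul.mp h2 with h|h
      exacts [not_dvd_two hp hodd h, hpw h]
    have hlb : P^l ∣ w₀ + b :=
      ((coprime_of_not_dvd hp hcm).pow_left).dvd_of_dvd_mul_left hprod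
    have hwb' : P^l ∣ -w₀ - b := by
      have e : -w₀ - b = -(w₀ + b) := by ring
      rw [e]; exact hlb.neg_right
    have hroot' : P^i ∣ (-w₀)^2 - d := by
      have e : (-w₀)^2 - d = w₀^2 - d := by ring
      rw [e]; exact hroot
    refine key_S hp hodd (f := 0) (c := i) (u := -w₀) (by simp)
      (fun _ h => hpw ((dvd_neg).mp h)) (by omega) (by omega) (by omega) hwb' hroot'
  · have hlb : P^l ∣ w₀ - b :=
      ((coprime_of_not_dvd hp hc).pow_left).dvd_of_dvd_mul_right hprod
    refine key_S hp hodd (f := 0) (c := i) (u := w₀) (by simp)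
      (fun _ h => hpw h) (by omega) (by omega) (by omega) hlb hroot
/-- An obstruction means no square root of `d` mod `p^i` is `≡ b (mod p^l)`. -/
lemma obs_to_noroot (hp : p.Prime) {i l : ℕ} {b d : ℤ} (hl1 : 1 ≤ l) (hli : l ≤ i)
    (hi : 1 ≤ i) (hobs : Obstruction p i l b d) :
    ∀ w : ℤ, (p:ℤ)^i ∣ w^2 - d → ¬ (p:ℤ)^l ∣ w - b := by
  haveI : Fact p.Prime := ⟨hp⟩
  set P := (p:ℤ) with hPdef
  have hP0 : P ≠ 0 := Int.natCast_ne_zero.mpr hp.ne_zero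
  intro w hwr hwb
  rcases hobs with ⟨hnd, μ, hval, hσ⟩ | ⟨hdd, s, hspar, hk⟩
  · have hd0 : d ≠ 0 := by rintro rfl; exact hnd (dvd_zero _)
    have hv1 : P^(2*μ) ∣ d := by
      rw [dvd_le_iff hp hd0]; omega
    have hv2 : ¬ P^(2*μ+1) ∣ d := by rw [dvd_le_iff hp hd0]; omega
    have hμi : 2*μ < i := by
      by_contra hc
      exact hnd ((pow_dvd_pow P (by omega)).trans hv1)
    have hw1 : P^(2*μ) ∣ w^2 := by
      have e : w^2 = (w^2 - d) + d := by ring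
      rw [e]; exact dvd_add ((pow_dvd_pow P (by omega)).trans hwr) hv1
    have hw2 : ¬ P^(2*μ+1) ∣ w^2 := by
      intro h
      apply hv2
      have e : d = w^2 - (w^2 - d) := by ring
      rw [e]; exact dvd_sub h ((pow_dvd_pow P (by omega)).trans hwr)
    have hw0 : w ≠ 0 := by rintro rfl; exact hw2 (by simp)
    have hmμ : padicValInt p w = μ := by
      have h1 := val_eq hp hw1 hw2
      have h2 : padicValInt p (w^2) = 2 * padicValInt p w := by
        have := padicValInt.mul (p := p) hw0 hw0
        rw [sq]; omega
      omega
    have hmw : P^μ ∣ w := by rw [dvd_le_iff hp hw0]; omega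
    have hmw2 : ¬ P^(μ+1) ∣ w := by rw [dvd_le_iff hp hw0]; omega
    obtain ⟨u, hwu, hpu⟩ := exact_decomp hp hmw hmw2
    -- d₁
    set d₁ := d / P^(2*μ) with hd₁def
    have hd₁ : d = P^(2*μ) * d₁ := (Int.mul_ediv_cancel' hv1).symm
    -- abbreviations
    have eA : P^(2*μ) = P^μ * P^μ := by rw [← pow_add]; congr 1; omega
    have eB : P^i = P^μ * P^μ * P^(i-2*μ) := by rw [mul_assoc, ← pow_add, ← pow_add]; congr 1; omega
    have eC : P^(i-μ) = P^μ * P^(i-2*μ) := by rw [← pow_add]; congr 1; omega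
    -- u^2 ≡ d₁ mod P^(i-2μ)
    have hud : P^(i-2*μ) ∣ u^2 - d₁ := by
      have h4 : P^(2*μ) * P^(i-2*μ) ∣ P^(2*μ) * (u^2 - d₁) := by
        have e : P^(2*μ) * (u^2 - d₁) = w^2 - d := by rw [hwu, hd₁, eA]; ring
        rw [e, ← pow_add, show 2*μ + (i - 2*μ) = i by omega]
        exact hwr
      exact (mul_dvd_mul_iff_left (pow_ne_zero _ hP0)).mp h4
    set B := P^(i-2*μ) with hBdef
    have hB0 : B ≠ 0 := pow_ne_zero _ hP0
    have hBpos : 0 < B := by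
      have : (0:ℤ) < P := by rw [hPdef]; exact_mod_cast hp.pos
      positivity
    set σ := u % B with hσdef
    set q := u / B with hqdef
    have hu_eq : u = B * q + σ := (Int.mul_ediv_add_emod u B).symm
    have hσ0 : 0 ≤ σ := Int.emod_nonneg u hB0
    have hσlt : σ < B := Int.emod_lt_of_pos u hBpos
    have hσd : B ∣ σ^2 - d₁ := by
      have e : σ^2 - d₁ = (σ - u)*(σ + u) + (u^2 - d₁) := by ring
      rw [e]
      refine dvd_add (Dvd.dvd.mul_right ⟨-q, by rw [hu_eq]; ring⟩ _) hud
    set Aμ := (P:ℤ)^μ with hAdef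
    have hA0 : Aμ ≠ 0 := pow_ne_zero _ hP0
    have hApos : 0 < Aμ := by
      have : (0:ℤ) < P := by rw [hPdef]; exact_mod_cast hp.pos
      positivity
    set j := q % Aμ with hjdef
    set r := q / Aμ with hrdef
    have hq_eq : q = Aμ * r + j := (Int.mul_ediv_add_emod q Aμ).symm
    have hj0 : 0 ≤ j := Int.emod_nonneg q hA0
    have hjlt : j < Aμ := Int.emod_lt_of_pos q hApos
    have hjcast : ((j.toNat : ℤ)) = j := Int.toNat_of_nonneg hj0
    have hjnat : j.toNat < p^μ := by
      have h1 : (j.toNat : ℤ) < ((p^μ : ℕ) : ℤ) := by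
        rw [hjcast]; push_cast; exact hjlt
      exact_mod_cast h1
    refine hσ σ hσ0 hσlt hσd j.toNat hjnat ?_
    have e : σ * P^μ + (j.toNat : ℤ) * P^(i-μ) - b = (w - b) + P^i * (-r) := by
      rw [hjcast, hwu, eC, eB, hu_eq, hq_eq]; ring
    rw [e]
    exact dvd_add hwb ((pow_dvd_pow P hli).mul_right _)
  · -- case iv
    have hsi : 2*s - 1 ≤ i ∧ i ≤ 2*s ∧ 1 ≤ s ∧ s ≤ i := by
      rcases hspar with h | h <;> omega
    have hw2 : P^i ∣ w^2 := by
      have e : w^2 = (w^2 - d) + d := by ring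
      rw [e]; exact dvd_add hwr hdd
    have hsw : P^s ∣ w := sqrt_dvd hp ((pow_dvd_pow P (by omega : 2*s-1 ≤ i)).trans hw2)
    obtain ⟨u, hwu⟩ := hsw
    set B := P^(i-s) with hBdef
    have hP0 : P ≠ 0 := Int.natCast_ne_zero.mpr hp.ne_zero
    have hB0 : B ≠ 0 := pow_ne_zero _ hP0
    have hBpos : 0 < B := by
      have : (0:ℤ) < P := by rw [hPdef]; exact_mod_cast hp.pos
      positivity
    set k := u % B with hkdef
    set q := u / B with hqdef
    have hu_eq : u = B * q + k := (Int.mul_ediv_add_emod u B).symm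
    have hk0 : 0 ≤ k := Int.emod_nonneg u hB0
    have hklt : k < B := Int.emod_lt_of_pos u hBpos
    have hkcast : ((k.toNat : ℤ)) = k := Int.toNat_of_nonneg hk0
    have hknat : k.toNat < p^(i-s) := by
      have h1 : (k.toNat : ℤ) < ((p^(i-s) : ℕ) : ℤ) := by
        rw [hkcast]; push_cast; exact hklt
      exact_mod_cast h1
    refine hk k.toNat hknat ?_
    have eB : P^i = P^(i-s) * P^s := by rw [← pow_add]; congr 1; omega
    have e : (k.toNat : ℤ) * P^s - b = (w - b) + P^i * (-q) := by
      rw [hkcast, hwu, eB, hu_eq]; ring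
    rw [e]
    exact dvd_add hwb ((pow_dvd_pow P hli).mul_right _)
/-- Conversely, if no square root of `d` mod `p^i` is `≡ b (mod p^l)` (and `d` is a QR),
then there is an obstruction. -/
lemma noroot_to_obs (hp : p.Prime) {i l : ℕ} {b d : ℤ} (hl1 : 1 ≤ l) (hli : l ≤ i)
    (hi : 1 ≤ i) (hqr : ∃ w : ℤ, (p:ℤ)^i ∣ w^2 - d)
    (hnr : ∀ w : ℤ, (p:ℤ)^i ∣ w^2 - d → ¬ (p:ℤ)^l ∣ w - b) :
    Obstruction p i l b d := by
  haveI : Fact p.Prime := ⟨hp⟩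
  set P := (p:ℤ) with hPdef
  have hP0 : P ≠ 0 := Int.natCast_ne_zero.mpr hp.ne_zero
  by_cases hdd : P^i ∣ d
  · right
    refine ⟨hdd, (i+1)/2, ?_, ?_⟩
    · rcases Nat.even_or_odd i with h | h
      · left; obtain ⟨t, ht⟩ := h; omega
      · right; obtain ⟨t, ht⟩ := h; omega
    · intro k hk hdvd
      set s := (i+1)/2 with hs
      refine hnr ((k:ℤ) * P^s) ?_ hdvd
      have e : ((k:ℤ) * P^s)^2 - d = P^(2*s) * (k:ℤ)^2 - d := by
        rw [mul_pow, ← pow_mul, show s*2 = 2*s from Nat.mul_comm s 2]; ring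
      rw [e]
      exact dvd_sub ((pow_dvd_pow P (by omega : i ≤ 2*s)).mul_right _) hdd
  · left
    obtain ⟨w, hwr⟩ := hqr
    have hd0 : d ≠ 0 := by rintro rfl; exact hdd (dvd_zero _)
    set v := padicValInt p d with hv
    have hv1 : P^v ∣ d := padicValInt_dvd d
    have hvi : v < i := by
      by_contra hc
      exact hdd ((pow_dvd_pow P (by omega)).trans hv1)
    have hv2 : ¬ P^(v+1) ∣ d := by rw [dvd_le_iff hp hd0]; omega
    have hw1 : P^v ∣ w^2 := by
      have e : w^2 = (w^2 - d) + d := by ring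
      rw [e]; exact dvd_add ((pow_dvd_pow P hvi.le).trans hwr) hv1
    have hw2 : ¬ P^(v+1) ∣ w^2 := by
      intro h
      apply hv2
      have e : d = w^2 - (w^2 - d) := by ring
      rw [e]; exact dvd_sub h ((pow_dvd_pow P (by omega)).trans hwr)
    have hw0 : w ≠ 0 := by rintro rfl; exact hw2 (by simp)
    have hvm : v = 2 * padicValInt p w := by
      have h1 := val_eq hp hw1 hw2
      have h2 : padicValInt p (w^2) = 2 * padicValInt p w := by
        have := padicValInt.mul (p := p) hw0 hw0
        rw [sq]; omega
      omega
    set μ := padicValInt p w with hμ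
    refine ⟨hdd, μ, by omega, ?_⟩
    intro σ hσ0 hσlt hσd j hj hdvd
    have hμi : 2*μ < i := by omega
    have hv1' : P^(2*μ) ∣ d := by rw [← hvm]; exact hv1
    have hd₁ : d = P^(2*μ) * (d / P^(2*μ)) := (Int.mul_ediv_cancel' hv1').symm
    obtain ⟨t, ht⟩ := hσd
    have eA : P^(2*μ) = P^μ * P^μ := by rw [← pow_add]; congr 1; omega
    have eC : P^(i-μ) = P^μ * P^(i-2*μ) := by rw [← pow_add]; congr 1; omega
    have eB : P^i = P^μ * P^μ * P^(i-2*μ) := by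
      rw [mul_assoc, ← pow_add, ← pow_add]; congr 1; omega
    refine hnr (σ * P^μ + (j:ℤ) * P^(i-μ)) ?_ hdvd
    have hd₂ : d = P^μ * P^μ * (d / P^(2*μ)) := by rw [← eA]; exact hd₁
    have e : (σ * P^μ + (j:ℤ) * P^(i-μ))^2 - d
        = P^i * (t + 2*σ*(j:ℤ) + P^(i-2*μ) * (j:ℤ)^2) := by
      rw [eC, eB, hd₂]
      linear_combination (P^μ * P^μ) * ht
    rw [e]
    exact Dvd.dvd.mul_right dvd_rfl _
end Helpers
/-- Paper's Corollary 6.2. -/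
theorem corollary_6_2 (p : ℕ) (hp : p.Prime) (hpodd : Odd p) (i l : ℕ)
    (hi : 2 ≤ i) (a b c : ℤ) (ha : a ≠ 0)
    (hl1 : 1 ≤ l) (hli : l < i) (hgcd : Int.gcd a ((p : ℤ) ^ i) = p ^ l) :
    IQF a b c ((p : ℤ) ^ i) ↔
      (¬ IsQR ((p : ℤ) ^ i) (b ^ 2 - 4 * a * c)) ∨
      (IsQR ((p : ℤ) ^ i) (b ^ 2 - 4 * a * c) ∧
        ((1 < l ∧ (p : ℤ) ∣ b ∧ Obstruction p i l b (b ^ 2 - 4 * a * c)) ∨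
         (l = 1 ∧ Odd i ∧ (p : ℤ) ∣ b ∧ (p : ℤ) ∣ c ∧
           (p : ℤ) ^ (i + 1) ∣ b ^ 2 - 4 * a * c))) := by
  have hP0 : (p:ℤ) ≠ 0 := Int.natCast_ne_zero.mpr hp.ne_zero
  -- extract the exact power of p in a
  have hla : (p:ℤ)^l ∣ a := by
    have h1 : ((Int.gcd a ((p:ℤ)^i) : ℕ) : ℤ) ∣ a := Int.gcd_dvd_left _ _
    rw [hgcd] at h1
    push_cast at h1
    exact h1
  have hl1a : ¬ (p:ℤ)^(l+1) ∣ a := by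
    intro h
    have h2 : (p:ℤ)^(l+1) ∣ (p:ℤ)^i := pow_dvd_pow _ (by omega)
    have h3 : (p:ℤ)^(l+1) ∣ ((Int.gcd a ((p:ℤ)^i) : ℕ) : ℤ) := Int.dvd_coe_gcd h h2
    rw [hgcd] at h3
    have h4 : (p:ℕ)^(l+1) ∣ p^l := by exact_mod_cast h3
    have h5 := (Nat.pow_dvd_pow_iff_le_right hp.one_lt).mp h4
    omega
  obtain ⟨a', ha', hpa'⟩ := exact_decomp hp hla hl1a
  rw [iqf_iff hp hpodd hl1 hli ha' hpa']
  set P := (p:ℤ) with hPdef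
  set d := b^2 - 4*a*c with hd
  have hdb : P^l ∣ b^2 - d := ⟨4*a'*c, by rw [hd, ha']; ring⟩
  constructor
  · intro hNoS
    by_cases hqr : IsQR (P^i) d
    swap
    · exact Or.inl hqr
    right
    refine ⟨hqr, ?_⟩
    obtain ⟨w₀, hw₀⟩ := hqr
    have hpb : P ∣ b := by
      by_contra hpb
      obtain ⟨w', h1, h2, h3⟩ := notb_S hp hpodd hl1 hli hw₀ hdb hpb
      exact h3 (hNoS w' h1 h2)
    have hpd : P ∣ d := by
      have h1 : P ∣ b^2 := by rw [sq]; exact hpb.mul_right b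
      have e : d = b^2 - (b^2 - d) := by ring
      rw [e]
      exact dvd_sub h1 ((dvd_pow_self P (by omega : l ≠ 0)).trans hdb)
    have hpw₀ : P ∣ w₀ := by
      have h1 : P ∣ w₀^2 := by
        have e : w₀^2 = (w₀^2 - d) + d := by ring
        rw [e]
        exact dvd_add ((dvd_pow_self P (by omega : i ≠ 0)).trans hw₀) hpd
      exact (intPrime hp).dvd_of_dvd_pow h1
    rcases Nat.lt_or_ge 1 l with hl2 | hl2
    · -- l ≥ 2
      left
      refine ⟨hl2, hpb, ?_⟩
      refine noroot_to_obs hp hl1 hli.le (by omega) ⟨w₀, hw₀⟩ ?_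
      intro w hwr hwb
      by_cases hdd : P^i ∣ d
      · obtain ⟨w', h1, h2, h3⟩ := caseB_S hp hpodd (by omega) hli hwr hwb hdd
        exact h3 (hNoS w' h1 h2)
      · obtain ⟨w', h1, h2, h3⟩ := caseA_S hp hpodd hl1 hli hwr hwb hdd
        exact h3 (hNoS w' h1 h2)
    · -- l = 1
      have hl' : l = 1 := by omega
      subst hl'
      right
      have hdd : P^i ∣ d := by
        by_contra hdd
        have hwb₀ : P^1 ∣ w₀ - b := by
          rw [pow_one]; exact dvd_sub hpw₀ hpb
        obtain ⟨w', h1, h2, h3⟩ := caseA_S hp hpodd le_rfl hli hw₀ hwb₀ hdd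
        exact h3 (hNoS w' h1 h2)
      have hdd1 : P^(i+1) ∣ d := by
        by_contra hdd1
        have h1 : P^1 ∣ (0:ℤ) - b := by rw [pow_one]; simpa using hpb.neg_right
        have h2 : P^i ∣ (0:ℤ)^2 - d := by simpa using hdd.neg_right
        have h3 := hNoS 0 h1 h2
        apply hdd1
        have h4 : P^(i+1) ∣ -d := by simpa using h3
        simpa using h4.neg_right
      have hiodd : Odd i := by
        by_contra hieven
        rw [Nat.not_odd_iff_even] at hieven
        obtain ⟨t, ht⟩ := hieven
        have ht1 : t ≠ 0 := by omega
        have h1 : P^1 ∣ P^t - b := by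
          rw [pow_one]
          exact dvd_sub (dvd_pow_self P ht1) hpb
        have e : (P^t)^2 = P^i := by rw [← pow_mul]; congr 1; omega
        have h2 : P^i ∣ (P^t)^2 - d := by rw [e]; exact dvd_sub dvd_rfl hdd
        have h3 := hNoS (P^t) h1 h2
        rw [e] at h3
        have h4 : P^(i+1) ∣ P^i := by
          have h5 := dvd_add h3 hdd1
          simpa using h5
        rw [hPdef] at h4
        have h6 : (p:ℕ)^(i+1) ∣ p^i := by exact_mod_cast h4
        have h7 := (Nat.pow_dvd_pow_iff_le_right hp.one_lt).mp h6
        omega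
      have hpc : P ∣ c := by
        have h2 : P^2 ∣ d := (pow_dvd_pow P (by omega : 2 ≤ i+1)).trans hdd1
        have hb2 : P^2 ∣ b^2 := by rw [sq, sq]; exact mul_dvd_mul hpb hpb
        have h4 : P * P ∣ P * (4*a'*c) := by
          have e : P * (4*a'*c) = b^2 - d := by rw [hd, ha']; ring
          rw [e]
          have e2 : P*P = P^2 := (sq P).symm
          rw [e2]
          exact dvd_sub hb2 h2
        have h6 : P ∣ 4*a'*c := (mul_dvd_mul_iff_left hP0).mp h4
        rcases (intPrime hp).dvd_mul.mp h6 with h | h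
        · rcases (intPrime hp).dvd_mul.mp h with h' | h'
          · exfalso
            rcases (intPrime hp).dvd_mul.mp
              (by rwa [show (4:ℤ) = 2*2 by norm_num] at h') with h'' | h'' <;>
              exact not_dvd_two hp hpodd h''
          · exact absurd h' hpa'
        · exact h
      exact ⟨rfl, hiodd, hpb, hpc, hdd1⟩
  · rintro (hqr | ⟨hqr, hcond⟩)
    · intro w hwb hwr
      exact absurd ⟨w, hwr⟩ hqr
    rcases hcond with ⟨hl2, hpb, hobs⟩ | ⟨hl', hiodd, hpb, hpc, hdd1⟩
    · intro w hwb hwr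
      exact absurd hwb (obs_to_noroot hp hl1 hli.le (by omega) hobs w hwr)
    · subst hl'
      intro w hwb hwr
      have hdd : P^i ∣ d := (pow_dvd_pow P (by omega : i ≤ i+1)).trans hdd1
      have hw2 : P^i ∣ w^2 := by
        have e : w^2 = (w^2 - d) + d := by ring
        rw [e]; exact dvd_add hwr hdd
      obtain ⟨t, ht⟩ := hiodd
      have hsw : P^(t+1) ∣ w := by
        refine sqrt_dvd hp ?_
        have e : 2*(t+1) - 1 = i := by omega
        rw [e]; exact hw2
      obtain ⟨u, hu⟩ := hsw
      have hw2' : P^(i+1) ∣ w^2 := by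
        refine ⟨u^2, ?_⟩
        rw [hu, mul_pow, ← pow_mul, show (t+1)*2 = i+1 by omega]
      exact dvd_sub hw2' hdd1
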